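/- arXiv:2310.09251 — 2 statements merged into one kernel-verified Lean document; each statement's English description precedes it below -/
import Mathlib

section
/- Let I ⊆ ℝ be an interval, φ : I → ℝ be concave and differentiable, u : ℝ^N → I, and x ∈ ℝ^N be such that both y ↦ (u(x)−u(y))/|x−y|^{N+2s} and y ↦ (φ(u(x))−φ(u(y)))/|x−y|^{N+2s} are Lebesgue integrable on ℝ^N. Then C_{N,s} ∫_{ℝ^N} (φ(u(x))−φ(u(y)))/|x−y|^{N+2s} dy ≥ φ'(u(x)) · C_{N,s} ∫_{ℝ^N} (u(x)−u(y))/|x−y|^{N+2s} dy; that is, (−Δ)^s(φ∘u)(x) ≥ φ'(u(x)) (−Δ)^s u(x). -/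
open MeasureTheory Real Filter

noncomputable section

abbrev En (N : ℕ) := EuclideanSpace ℝ (Fin N)

/-- The fractional Laplacian constant `C_{N,s}`. -/
def Cns (N : ℕ) (s : ℝ) : ℝ :=
  4 ^ s * Real.Gamma (((N : ℝ) + 2 * s) / 2) /
    (Real.pi ^ ((N : ℝ) / 2) * |Real.Gamma (-s)|)

theorem pointwise_concave_chain_rule
    (N : ℕ) (hN : 2 ≤ N) (s : ℝ) (hs : s ∈ Set.Ioo (0 : ℝ) 1)
    (I : Set ℝ) (hI : I.OrdConnected)
    (φ φ' : ℝ → ℝ) (hconc : ConcaveOn ℝ I φ)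
    (hφ : ∀ t ∈ I, HasDerivAt φ (φ' t) t)
    (u : En N → ℝ) (humem : ∀ y, u y ∈ I)
    (x : En N)
    (hint₁ : Integrable fun y => (u x - u y) / ‖x - y‖ ^ ((N : ℝ) + 2 * s))
    (hint₂ : Integrable fun y => (φ (u x) - φ (u y)) / ‖x - y‖ ^ ((N : ℝ) + 2 * s)) :
    φ' (u x) * (Cns N s * ∫ y, (u x - u y) / ‖x - y‖ ^ ((N : ℝ) + 2 * s)) ≤
      Cns N s * ∫ y, (φ (u x) - φ (u y)) / ‖x - y‖ ^ ((N : ℝ) + 2 * s) := by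
  -- tangent line inequality for concave φ
  have key : ∀ b ∈ I, φ' (u x) * (u x - b) ≤ φ (u x) - φ b := by
    intro b hb
    rcases lt_trichotomy b (u x) with h | h | h
    · have hsl := hconc.le_slope_of_hasDerivAt hb (humem x) h (hφ _ (humem x))
      rw [slope_def_field] at hsl
      have := mul_le_mul_of_nonneg_right hsl (sub_pos.mpr h).le
      rw [div_mul_cancel₀ _ (sub_ne_zero.mpr h.ne')] at this
      nlinarith
    · simp [h]
    · have hsl := hconc.slope_le_of_hasDerivAt (humem x) hb h (hφ _ (humem x))
      rw [slope_def_field] at hsl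
      have := mul_le_mul_of_nonneg_right hsl (sub_pos.mpr h).le
      rw [div_mul_cancel₀ _ (sub_ne_zero.mpr h.ne')] at this
      nlinarith
  -- pointwise inequality of integrands
  have hpt : ∀ y, φ' (u x) * ((u x - u y) / ‖x - y‖ ^ ((N : ℝ) + 2 * s)) ≤
      (φ (u x) - φ (u y)) / ‖x - y‖ ^ ((N : ℝ) + 2 * s) := by
    intro y
    set d := ‖x - y‖ ^ ((N : ℝ) + 2 * s) with hd
    have hdnn : 0 ≤ d := Real.rpow_nonneg (norm_nonneg _) _
    rcases hdnn.eq_or_lt with h0 | h0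
    · simp [← h0]
    · rw [mul_div_assoc']
      exact div_le_div_of_nonneg_right (key (u y) (humem y)) h0.le
  have hmono : ∫ y, φ' (u x) * ((u x - u y) / ‖x - y‖ ^ ((N : ℝ) + 2 * s)) ≤
      ∫ y, (φ (u x) - φ (u y)) / ‖x - y‖ ^ ((N : ℝ) + 2 * s) :=
    integral_mono (hint₁.const_mul _) hint₂ hpt
  rw [MeasureTheory.integral_const_mul] at hmono
  have hC : 0 ≤ Cns N s := by
    unfold Cns
    apply div_nonneg
    · exact mul_nonneg (Real.rpow_nonneg (by norm_num) _)
        (Real.Gamma_pos_of_pos (by have h0 := hs.1; positivity)).le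
    · exact mul_nonneg (Real.rpow_nonneg Real.pi_pos.le _) (abs_nonneg _)
  calc φ' (u x) * (Cns N s * ∫ y, (u x - u y) / ‖x - y‖ ^ ((N : ℝ) + 2 * s))
      = Cns N s * (φ' (u x) * ∫ y, (u x - u y) / ‖x - y‖ ^ ((N : ℝ) + 2 * s)) := by ring
    _ ≤ _ := mul_le_mul_of_nonneg_left hmono hC

end
end

section
/- Let Ω ⊆ ℝ^N be open, λ > 0, and let u : ℝ^N → ℝ be continuous and bounded with u(x) ≤ 0 for every x ∈ Ωᶜ and limsup_{|x|→∞} u(x) ≤ 0 (i.e., for every ε > 0 there is R > 0 with u(x) ≤ ε whenever |x| ≥ R). Assume that for every x₀ ∈ Ω at which u attains its global maximum over ℝ^N with u(x₀) > 0, one has C_{N,s} ∫_{ℝ^N} (u(x₀)−u(y))/|x₀−y|^{N+2s} dy + λ u(x₀) ≤ 0 (the integral being well defined in [0,+∞] since the integrand is nonnegative). Then u(x) ≤ 0 for every x ∈ ℝ^N. -/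
open MeasureTheory Real Filter

noncomputable section

theorem viscosity_maximum_principle
    (N : ℕ) (hN : 2 ≤ N) (s lam : ℝ)
    (hs : s ∈ Set.Ioo (0 : ℝ) 1) (hlam : 0 < lam)
    (Ω : Set (En N)) (hΩ : IsOpen Ω)
    (u : En N → ℝ) (huc : Continuous u) (hub : ∃ B : ℝ, ∀ x, |u x| ≤ B)
    (hbd : ∀ x, x ∉ Ω → u x ≤ 0)
    (hlimsup : ∀ ε > (0 : ℝ), ∃ R > (0 : ℝ), ∀ x : En N, R ≤ ‖x‖ → u x ≤ ε)
    (hsub : ∀ x₀ ∈ Ω, (∀ y, u y ≤ u x₀) → 0 < u x₀ →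
      ENNReal.ofReal (Cns N s) *
          (∫⁻ y, ENNReal.ofReal ((u x₀ - u y) / ‖x₀ - y‖ ^ ((N : ℝ) + 2 * s)))
        + ENNReal.ofReal (lam * u x₀) ≤ 0) :
    ∀ x, u x ≤ 0 := by
  by_contra h
  push_neg at h
  obtain ⟨x, hx⟩ := h
  -- get R from the limsup condition with ε = u x / 2
  obtain ⟨R, hR0, hR⟩ := hlimsup (u x / 2) (by linarith)
  set R' : ℝ := max R ‖x‖ with hR'
  have hxball : x ∈ Metric.closedBall (0 : En N) R' := by
    simp only [Metric.mem_closedBall, dist_eq_norm, sub_zero]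
    exact le_max_right _ _
  have hK : IsCompact (Metric.closedBall (0 : En N) R') :=
    isCompact_closedBall _ _
  obtain ⟨x₀, hx₀mem, hx₀max⟩ :=
    hK.exists_isMaxOn ⟨x, hxball⟩ huc.continuousOn
  have hux₀ : u x ≤ u x₀ := hx₀max hxball
  have hx₀pos : 0 < u x₀ := lt_of_lt_of_le hx hux₀
  have hglobal : ∀ y, u y ≤ u x₀ := by
    intro y
    by_cases hy : y ∈ Metric.closedBall (0 : En N) R'
    · exact hx₀max hy
    · have hy' : R ≤ ‖y‖ := by
        simp only [Metric.mem_closedBall, dist_eq_norm, sub_zero, not_le] at hy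
        have : R' < ‖y‖ := by simpa using hy
        exact le_trans (le_max_left _ _) this.le
      have : u y ≤ u x / 2 := hR y hy'
      have hxle : u x ≤ u x₀ := hx₀max hxball
      linarith
  have hx₀Ω : x₀ ∈ Ω := by
    by_contra hnot
    exact absurd (hbd x₀ hnot) (not_le.mpr hx₀pos)
  have hsum := hsub x₀ hx₀Ω hglobal hx₀pos
  have h2 : ENNReal.ofReal (lam * u x₀) = 0 := by
    have := le_trans le_add_self hsum
    simpa using this
  have h3 : 0 < lam * u x₀ := mul_pos hlam hx₀pos
  rw [ENNReal.ofReal_eq_zero] at h2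
  linarith

end
end
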